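/- arXiv:1201.2286 — 2 statements merged into one kernel-verified Lean document; each statement's English description precedes it below -/
import Mathlib

section
/- Lemma 2.3 (Steklov smoothing with a periodic multiplier). Let f : ℝ^d → ℂ be Γ-periodic and measurable with ∫_Ω |f(x)|² dx < ∞. Then for every ε > 0 and every u ∈ L²(ℝ^d; ℂ^m), the function x ↦ f(x/ε)·(S_ε u)(x) belongs to L²(ℝ^d; ℂ^m) and ‖f(·/ε) S_ε u‖_{L²(ℝ^d;ℂ^m)} ≤ |Ω|^{−1/2} (∫_Ω |f(x)|² dx)^{1/2} ‖u‖_{L²(ℝ^d;ℂ^m)}. -/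
open MeasureTheory Submodule
open scoped ENNReal NNReal Pointwise

noncomputable section

local notation "Euc" => EuclideanSpace ℝ

lemma periodic_translate_lintegral {d : ℕ}
    (b : Module.Basis (Fin d) ℝ (EuclideanSpace ℝ (Fin d)))
    (G : EuclideanSpace ℝ (Fin d) → ℝ≥0∞)
    (hG : ∀ γ ∈ span ℤ (Set.range ⇑b), ∀ x, G (x + γ) = G x)
    (c : EuclideanSpace ℝ (Fin d)) :
    ∫⁻ z in ZSpan.fundamentalDomain b, G (c + z) =
      ∫⁻ z in ZSpan.fundamentalDomain b, G z := by
  set L := span ℤ (Set.range ⇑b)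
  have hfd : IsAddFundamentalDomain L (ZSpan.fundamentalDomain b) volume :=
    ZSpan.isAddFundamentalDomain b volume
  haveI : VAddCommClass (EuclideanSpace ℝ (Fin d)) ↥L (EuclideanSpace ℝ (Fin d)) :=
    ⟨fun g l x => by change g + (↑l + x) = ↑l + (g + x); abel⟩
  have htd : IsAddFundamentalDomain (↥L) (c +ᵥ ZSpan.fundamentalDomain b) volume :=
    hfd.vadd_of_comm c
  haveI : MeasurableVAdd ↥L (EuclideanSpace ℝ (Fin d)) :=
    MeasurableVAdd.mk (toMeasurableConstVAdd := ⟨fun l => by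
      have h : Measurable fun x : EuclideanSpace ℝ (Fin d) =>
          (↑l : EuclideanSpace ℝ (Fin d)) + x := measurable_const_add _
      exact h⟩)
     (measurable_vadd_const := fun x => by
      have h : Measurable fun l : ↥L => (↑l : EuclideanSpace ℝ (Fin d)) + x :=
        (measurable_subtype_coe).add_const x
      exact h)
  haveI : VAddInvariantMeasure ↥L (EuclideanSpace ℝ (Fin d)) volume :=
    ⟨fun l s _ => by
      change volume ((fun x => (↑l : EuclideanSpace ℝ (Fin d)) + x) ⁻¹' s) = volume s
      exact measure_preimage_add volume _ s⟩
  have hinv : ∀ (γ : L) (x : EuclideanSpace ℝ (Fin d)), G (γ +ᵥ x) = G x := by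
    intro γ x
    change G (↑γ + x) = G x
    rw [add_comm]
    exact hG γ γ.2 x
  have h1 : ∫⁻ z in (c +ᵥ ZSpan.fundamentalDomain b), G z =
      ∫⁻ z in ZSpan.fundamentalDomain b, G z := htd.setLIntegral_eq hfd G hinv
  rw [← h1]
  have hemb : MeasurableEmbedding (fun z : EuclideanSpace ℝ (Fin d) => c + z) :=
    (MeasurableEquiv.addLeft c).measurableEmbedding
  have hmp : MeasurePreserving (fun z : EuclideanSpace ℝ (Fin d) => c + z) volume volume :=
    measurePreserving_add_left volume c
  have hpre : (fun z : EuclideanSpace ℝ (Fin d) => c + z) ⁻¹' (c +ᵥ ZSpan.fundamentalDomain b)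
      = ZSpan.fundamentalDomain b := by
    ext z; simp [Set.mem_vadd_set, vadd_eq_add]
  have h2 := hmp.setLIntegral_comp_preimage_emb hemb G (c +ᵥ ZSpan.fundamentalDomain b)
  rw [hpre] at h2
  exact h2

set_option maxHeartbeats 1600000 in
/-- **Lemma 2.3 (Steklov smoothing with a periodic multiplier).**
Let `Γ ⊂ ℝ^d` be the lattice generated by a basis `a`, with fundamental
parallelepiped `Ω`.  Let `f : ℝ^d → ℂ` be `Γ`-periodic, measurable, with
`∫_Ω |f|² < ∞`.  Then for every `ε > 0` and `u ∈ L²(ℝ^d; ℂ^m)`, the function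
`x ↦ f(x/ε) (S_ε u)(x)` belongs to `L²(ℝ^d; ℂ^m)` and
`‖f(·/ε) S_ε u‖_{L²} ≤ |Ω|^{-1/2} (∫_Ω |f|²)^{1/2} ‖u‖_{L²}`, where
`(S_ε u)(x) = |Ω|⁻¹ ∫_Ω u(x - εz) dz` is the Steklov smoothing operator. -/
theorem steklov_smoothing_periodic_multiplier
    (d m : ℕ) (hd : 0 < d) (hm : 0 < m)
    (a : Fin d → EuclideanSpace ℝ (Fin d))
    (ha_indep : LinearIndependent ℝ a)
    (ha_span : Submodule.span ℝ (Set.range a) = ⊤)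
    (Ω : Set (EuclideanSpace ℝ (Fin d)))
    (hΩ : Ω = {x | ∃ t : Fin d → ℝ, (∀ i, 0 ≤ t i ∧ t i < 1) ∧ x = ∑ i, t i • a i})
    (f : EuclideanSpace ℝ (Fin d) → ℂ)
    (hf_meas : Measurable f)
    (hf_per : ∀ (ν : Fin d → ℤ) (x : EuclideanSpace ℝ (Fin d)),
      f (x + ∑ i, (ν i : ℝ) • a i) = f x)
    (hf_L2 : IntegrableOn (fun x => ‖f x‖ ^ 2) Ω volume)
    (ε : ℝ) (hε : 0 < ε)
    (u : EuclideanSpace ℝ (Fin d) → EuclideanSpace ℂ (Fin m))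
    (hu : MemLp u 2 volume) :
    MemLp (fun x => f (ε⁻¹ • x) •
        ((volume Ω).toReal⁻¹ • ∫ z in Ω, u (x - ε • z))) 2 volume ∧
    Real.sqrt (∫ x, ‖f (ε⁻¹ • x) •
        ((volume Ω).toReal⁻¹ • ∫ z in Ω, u (x - ε • z))‖ ^ 2) ≤
      (Real.sqrt ((volume Ω).toReal))⁻¹ *
      Real.sqrt (∫ x in Ω, ‖f x‖ ^ 2) *
      Real.sqrt (∫ x, ‖u x‖ ^ 2) := by
  classical
  -- the basis
  let b : Module.Basis (Fin d) ℝ (Euc (Fin d)) := Module.Basis.mk ha_indep (by rw [ha_span])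
  have hba : ∀ i, b i = a i := fun i => by simp [b, Module.Basis.mk_apply]
  -- Ω is the fundamental domain of b
  have hΩb : Ω = ZSpan.fundamentalDomain b := by
    ext x
    rw [hΩ]
    simp only [Set.mem_setOf_eq, ZSpan.mem_fundamentalDomain, Set.mem_Ico]
    constructor
    · rintro ⟨t, ht, rfl⟩ i
      have h : (∑ i, t i • a i) = ∑ i, t i • b i := by simp [hba]
      rw [h, b.repr_sum_self]
      exact ht i
    · intro h
      refine ⟨fun i => b.repr x i, h, ?_⟩
      have h3 : (∑ i, (b.repr x) i • a i) = ∑ i, (b.repr x) i • b i :=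
        Finset.sum_congr rfl fun i _ => by rw [hba]
      rw [h3, b.sum_repr x]
  have hΩmeas : MeasurableSet Ω := by
    rw [hΩb]; exact ZSpan.fundamentalDomain_measurableSet b
  have hΩ0 : volume Ω ≠ 0 := by
    rw [hΩb]; exact ZSpan.measure_fundamentalDomain_ne_zero b
  have hΩtop : volume Ω ≠ ⊤ := by
    rw [hΩb]
    exact ((ZSpan.fundamentalDomain_isBounded b).measure_lt_top).ne
  -- measurable representative of u
  set v := hu.1.mk u with hv_def
  have hv_sm : StronglyMeasurable v := hu.1.stronglyMeasurable_mk
  have huv : u =ᵐ[volume] v := hu.1.ae_eq_mk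
  -- the quasi-measure-preserving map
  have hT : Measure.QuasiMeasurePreserving
      (fun p : Euc (Fin d) × Euc (Fin d) => p.1 - ε • p.2)
      (volume.prod (volume.restrict Ω)) volume := by
    apply MeasureTheory.QuasiMeasurePreserving.prod_of_left
    · exact measurable_fst.sub (measurable_snd.const_smul ε)
    · refine Filter.Eventually.of_forall fun z => ?_
      have h : (fun x : Euc (Fin d) => x - ε • z) = fun x : Euc (Fin d) => x + (-(ε • z)) := by
        funext x; rw [sub_eq_add_neg]
      rw [h]
      exact (measurePreserving_add_right volume (-(ε • z))).quasiMeasurePreserving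
  -- a.e. equality of the integrals over Ω
  have haeuv : ∀ᵐ x ∂(volume : Measure (Euc (Fin d))),
      (∫ z in Ω, u (x - ε • z)) = ∫ z in Ω, v (x - ε • z) := by
    have h1 : ∀ᵐ p ∂(volume.prod (volume.restrict Ω)),
        u (p.1 - ε • p.2) = v (p.1 - ε • p.2) := hT.ae_eq_comp huv
    have h2 := Measure.ae_ae_of_ae_prod h1
    filter_upwards [h2] with x hx
    exact integral_congr_ae hx
  -- the target-function pieces
  set c₀ : ℝ := (volume Ω).toReal⁻¹ with hc₀
  set Fu := fun x => f (ε⁻¹ • x) • (c₀ • ∫ z in Ω, u (x - ε • z)) with hFu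
  set Fv := fun x => f (ε⁻¹ • x) • (c₀ • ∫ z in Ω, v (x - ε • z)) with hFv
  have hFuv : Fu =ᵐ[volume] Fv := by
    filter_upwards [haeuv] with x hx
    simp only [Fu, Fv, hx]
  have hFv_sm : StronglyMeasurable Fv := by
    have hw : StronglyMeasurable fun x : Euc (Fin d) => ∫ z in Ω, v (x - ε • z) := by
      have h : StronglyMeasurable fun p : Euc (Fin d) × Euc (Fin d) => v (p.1 - ε • p.2) :=
        hv_sm.comp_measurable (measurable_fst.sub (measurable_snd.const_smul ε))
      exact h.integral_prod_right'
    have h1 : StronglyMeasurable fun x : Euc (Fin d) => f (ε⁻¹ • x) :=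
      (hf_meas.comp (measurable_const_smul ε⁻¹)).stronglyMeasurable
    have h2 : StronglyMeasurable fun x : Euc (Fin d) =>
        c₀ • ∫ z in Ω, v (x - ε • z) := hw.const_smul c₀
    exact h1.smul h2
  -- ℝ≥0∞-valued quantities
  set G : Euc (Fin d) → ℝ≥0∞ := fun y => (‖f y‖₊ : ℝ≥0∞) ^ 2 with hG
  set W : Euc (Fin d) → ℝ≥0∞ := fun x => (‖v x‖₊ : ℝ≥0∞) ^ 2 with hW
  have hGmeas : Measurable G := by
    have h : Measurable fun y : Euc (Fin d) => (‖f y‖₊ : ℝ≥0∞) ^ 2 :=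
      (hf_meas.nnnorm.coe_nnreal_ennreal).pow_const 2
    exact h
  have hWmeas : Measurable W := by
    have h : Measurable fun y : Euc (Fin d) => (‖v y‖₊ : ℝ≥0∞) ^ 2 :=
      (hv_sm.nnnorm.measurable.coe_nnreal_ennreal).pow_const 2
    exact h
  set C : ℝ≥0∞ := ∫⁻ y in Ω, G y with hC
  set U : ℝ≥0∞ := ∫⁻ x, W x with hU
  -- periodicity of G
  have hGper : ∀ γ ∈ span ℤ (Set.range ⇑b), ∀ x, G (x + γ) = G x := by
    intro γ hγ x
    rw [mem_span_range_iff_exists_fun] at hγ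
    obtain ⟨n, hn⟩ := hγ
    have hγa : γ = ∑ i, (n i : ℝ) • a i := by
      rw [← hn]
      refine Finset.sum_congr rfl fun i _ => ?_
      rw [hba, Int.cast_smul_eq_zsmul]
    simp only [hG]
    rw [hγa, hf_per n x]
  have hper : ∀ c : Euc (Fin d), ∫⁻ z in Ω, G (c + z) = C := by
    intro c
    rw [hC, hΩb]
    exact periodic_translate_lintegral b G hGper c
  -- finiteness
  have hCtop : C ≠ ⊤ := by
    have h := hf_L2.2
    rw [hasFiniteIntegral_def] at h
    have heq : ∀ y : Euc (Fin d), (‖(‖f y‖ ^ 2 : ℝ)‖₊ : ℝ≥0∞) = G y := by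
      intro y
      simp [hG, ← ENNReal.coe_pow, nnnorm_pow, nnnorm_norm]
    rw [hC]
    refine ne_of_lt ?_
    calc ∫⁻ y in Ω, G y = ∫⁻ y in Ω, (‖(‖f y‖ ^ 2 : ℝ)‖₊ : ℝ≥0∞) :=
          lintegral_congr fun y => (heq y).symm
      _ < ⊤ := h
  have hUu : (∫⁻ x, (‖u x‖₊ : ℝ≥0∞) ^ 2) = U := by
    rw [hU]
    refine lintegral_congr_ae ?_
    filter_upwards [huv] with x hx
    rw [hW, hx]
  have hrp : ∀ c : ℝ≥0∞, c ^ (2:ℝ) = c ^ (2:ℕ) := fun c => by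
    rw [← ENNReal.rpow_natCast]; norm_num
  have hUtop : U ≠ ⊤ := by
    rw [← hUu]
    have h2 := hu.2
    rw [eLpNorm_eq_lintegral_rpow_enorm_toReal (by norm_num) (by norm_num)] at h2
    simp only [ENNReal.toReal_ofNat, enorm_eq_nnnorm] at h2
    intro hcon
    have h3 : (∫⁻ x, (‖u x‖₊ : ℝ≥0∞) ^ (2:ℝ)) = ⊤ := by
      rw [← hcon]
      exact lintegral_congr fun x => hrp _
    rw [h3] at h2
    simp [ENNReal.top_rpow_of_pos] at h2
  -- the two main auxiliary functions
  set Φ : Euc (Fin d) → ℝ≥0∞ := fun x => G (ε⁻¹ • x) with hΦ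
  set K : Euc (Fin d) → ℝ≥0∞ := fun x => ∫⁻ z in Ω, W (x - ε • z) with hK
  have hΦmeas : Measurable Φ := hGmeas.comp (measurable_const_smul ε⁻¹)
  have hΦtop : ∀ x, Φ x ≠ ⊤ := fun x => ENNReal.pow_ne_top ENNReal.coe_ne_top
  have hWtop : ∀ x, W x ≠ ⊤ := fun x => ENNReal.pow_ne_top ENNReal.coe_ne_top
  have hWT : Measurable fun p : Euc (Fin d) × Euc (Fin d) => W (p.1 - ε • p.2) :=
    hWmeas.comp (measurable_fst.sub (measurable_snd.const_smul ε))
  -- the main exchange computation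
  have hmain : ∫⁻ x, Φ x * K x = C * U := by
    have hmeas1 : AEMeasurable (Function.uncurry fun x z : Euc (Fin d) => Φ x * W (x - ε • z))
        (volume.prod (volume.restrict Ω)) := by
      have h : Measurable fun p : Euc (Fin d) × Euc (Fin d) => Φ p.1 * W (p.1 - ε • p.2) :=
        (hΦmeas.comp measurable_fst).mul hWT
      exact h.aemeasurable
    have hmeas2 : AEMeasurable
        (Function.uncurry fun z x : Euc (Fin d) => G (ε⁻¹ • x + z) * W x)
        ((volume.restrict Ω).prod volume) := by
      have h : Measurable fun p : Euc (Fin d) × Euc (Fin d) => G (ε⁻¹ • p.2 + p.1) * W p.2 :=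
        (hGmeas.comp ((measurable_snd.const_smul ε⁻¹).add measurable_fst)).mul
          (hWmeas.comp measurable_snd)
      exact h.aemeasurable
    calc ∫⁻ x, Φ x * K x = ∫⁻ x, ∫⁻ z in Ω, Φ x * W (x - ε • z) := by
          refine lintegral_congr fun x => ?_
          exact (lintegral_const_mul' (Φ x) _ (hΦtop x)).symm
      _ = ∫⁻ z in Ω, ∫⁻ x, Φ x * W (x - ε • z) := lintegral_lintegral_swap hmeas1
      _ = ∫⁻ z in Ω, ∫⁻ x, G (ε⁻¹ • x + z) * W x := by
          refine lintegral_congr fun z => ?_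
          have key : ∀ x : Euc (Fin d), Φ (x + ε • z) * W (x + ε • z - ε • z) =
              G (ε⁻¹ • x + z) * W x := by
            intro x
            have h1 : Φ (x + ε • z) = G (ε⁻¹ • x + z) := by
              simp only [hΦ]
              congr 1
              rw [smul_add, smul_smul, inv_mul_cancel₀ hε.ne', one_smul]
            have h2 : x + ε • z - ε • z = x := add_sub_cancel_right x (ε • z)
            rw [h1, h2]
          exact ((lintegral_add_right_eq_self
            (fun y => Φ y * W (y - ε • z)) (ε • z)).symm).trans (lintegral_congr key)
      _ = ∫⁻ x, ∫⁻ z in Ω, G (ε⁻¹ • x + z) * W x := lintegral_lintegral_swap hmeas2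
      _ = ∫⁻ x, C * W x := by
          refine lintegral_congr fun x => ?_
          rw [lintegral_mul_const' (W x) _ (hWtop x), hper]
      _ = C * U := lintegral_const_mul' C _ hCtop
  -- pointwise Cauchy-Schwarz bound
  have hsq : ∀ c : ℝ≥0∞, (c ^ ((2:ℝ)⁻¹)) ^ (2:ℕ) = c := fun c => by
    rw [← hrp, ← ENNReal.rpow_mul]
    norm_num
  have hptw : ∀ x, (‖Fv x‖₊ : ℝ≥0∞) ^ 2 ≤ (volume Ω)⁻¹ * (Φ x * K x) := by
    intro x
    set J : ℝ≥0∞ := ∫⁻ z in Ω, (‖v (x - ε • z)‖₊ : ℝ≥0∞) with hJ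
    have hCS : J ^ 2 ≤ volume Ω * K x := by
      have hpq : Real.HolderConjugate 2 2 := Real.HolderConjugate.two_two
      have h2m : AEMeasurable (fun z => (‖v (x - ε • z)‖₊ : ℝ≥0∞)) (volume.restrict Ω) :=
        ((hv_sm.comp_measurable
          ((measurable_const (a := x)).sub (measurable_id.const_smul ε))).nnnorm.measurable.coe_nnreal_ennreal).aemeasurable
      have hH := ENNReal.lintegral_mul_le_Lp_mul_Lq (volume.restrict Ω) hpq
        (aemeasurable_const (b := (1:ℝ≥0∞))) h2m
      simp only [Pi.mul_apply, one_mul, ENNReal.one_rpow] at hH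
      have hone : (∫⁻ _ in Ω, (1:ℝ≥0∞)) = volume Ω := by
        rw [setLIntegral_one]
      rw [hone] at hH
      have hre : (∫⁻ z in Ω, (‖v (x - ε • z)‖₊ : ℝ≥0∞) ^ (2:ℝ)) = K x := by
        refine lintegral_congr fun z => ?_
        rw [hrp]
      rw [hre] at hH
      calc J ^ 2 ≤ ((volume Ω) ^ (1/(2:ℝ)) * (K x) ^ (1/(2:ℝ))) ^ (2:ℕ) := by
            exact pow_le_pow_left' hH 2
        _ = volume Ω * K x := by
            rw [mul_pow]
            rw [show (1/(2:ℝ)) = (2:ℝ)⁻¹ by norm_num]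
            rw [hsq, hsq]
    have hJle : (‖∫ z in Ω, v (x - ε • z)‖₊ : ℝ≥0∞) ≤ J :=
      enorm_integral_le_lintegral_enorm _
    have hc₀e : (‖c₀‖₊ : ℝ≥0∞) = (volume Ω)⁻¹ := by
      have h0 : 0 ≤ c₀ := by positivity
      rw [← enorm_eq_nnnorm, Real.enorm_eq_ofReal h0, hc₀, ← ENNReal.toReal_inv,
        ENNReal.ofReal_toReal (ENNReal.inv_ne_top.2 hΩ0)]
    have hnormeq : (‖Fv x‖₊ : ℝ≥0∞) = (‖f (ε⁻¹ • x)‖₊ : ℝ≥0∞) *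
        ((volume Ω)⁻¹ * (‖∫ z in Ω, v (x - ε • z)‖₊ : ℝ≥0∞)) := by
      simp only [hFv]
      rw [nnnorm_smul, nnnorm_smul, ENNReal.coe_mul, ENNReal.coe_mul, hc₀e]
    calc (‖Fv x‖₊ : ℝ≥0∞) ^ 2
        = (‖f (ε⁻¹ • x)‖₊ : ℝ≥0∞) ^ 2 *
          ((volume Ω)⁻¹ ^ 2 * (‖∫ z in Ω, v (x - ε • z)‖₊ : ℝ≥0∞) ^ 2) := by
          rw [hnormeq]; ring
      _ ≤ (‖f (ε⁻¹ • x)‖₊ : ℝ≥0∞) ^ 2 * ((volume Ω)⁻¹ ^ 2 * (volume Ω * K x)) := by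
          refine mul_le_mul_right (mul_le_mul_right ?_ _) _
          exact le_trans (pow_le_pow_left' hJle 2) hCS
      _ = (volume Ω)⁻¹ * (Φ x * K x) := by
          have hinv : (volume Ω)⁻¹ ^ 2 * (volume Ω * K x) = (volume Ω)⁻¹ * K x := by
            rw [pow_two, mul_assoc, ← mul_assoc (volume Ω)⁻¹ (volume Ω) (K x),
              ENNReal.inv_mul_cancel hΩ0 hΩtop, one_mul]
          rw [hinv, hΦ]
          ring
  -- the total bound
  set I : ℝ≥0∞ := ∫⁻ x, (‖Fv x‖₊ : ℝ≥0∞) ^ 2 with hI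
  have hIle : I ≤ (volume Ω)⁻¹ * (C * U) := by
    calc I ≤ ∫⁻ x, (volume Ω)⁻¹ * (Φ x * K x) := lintegral_mono hptw
      _ = (volume Ω)⁻¹ * ∫⁻ x, Φ x * K x :=
          lintegral_const_mul' _ _ (ENNReal.inv_ne_top.2 hΩ0)
      _ = (volume Ω)⁻¹ * (C * U) := by rw [hmain]
  have hBtop : (volume Ω)⁻¹ * (C * U) ≠ ⊤ :=
    ENNReal.mul_ne_top (ENNReal.inv_ne_top.2 hΩ0) (ENNReal.mul_ne_top hCtop hUtop)
  have hItop : I ≠ ⊤ := ne_top_of_le_ne_top hBtop hIle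
  -- MemLp
  have hmem : MemLp Fu 2 volume := by
    refine ⟨hFv_sm.aestronglyMeasurable.congr hFuv.symm, ?_⟩
    rw [eLpNorm_congr_ae hFuv, eLpNorm_eq_lintegral_rpow_enorm_toReal (by norm_num) (by norm_num)]
    simp only [ENNReal.toReal_ofNat, enorm_eq_nnnorm]
    have heq : (∫⁻ x, (‖Fv x‖₊ : ℝ≥0∞) ^ (2:ℝ)) = I := lintegral_congr fun x => hrp _
    rw [heq]
    exact ENNReal.rpow_lt_top_of_nonneg (by norm_num) hItop
  refine ⟨hmem, ?_⟩
  -- identify the real integrals with toReal of the lintegrals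
  have hIeq : (∫ x, ‖Fu x‖ ^ 2) = I.toReal := by
    have h1 : (∫ x, ‖Fu x‖ ^ 2) = ∫ x, ‖Fv x‖ ^ 2 := by
      refine integral_congr_ae ?_
      filter_upwards [hFuv] with x hx
      rw [hx]
    rw [h1, integral_eq_lintegral_of_nonneg_ae (Filter.Eventually.of_forall fun x => by positivity)
      ((hFv_sm.norm.measurable.pow_const 2).aestronglyMeasurable)]
    congr 1
    refine lintegral_congr fun x => ?_
    rw [ENNReal.ofReal_pow (norm_nonneg _), ofReal_norm, enorm_eq_nnnorm]
  have hCeq : (∫ x in Ω, ‖f x‖ ^ 2) = C.toReal := by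
    rw [integral_eq_lintegral_of_nonneg_ae (Filter.Eventually.of_forall fun x => by positivity)
      ((hf_meas.norm.pow_const 2).aestronglyMeasurable)]
    congr 1
    refine lintegral_congr fun x => ?_
    rw [ENNReal.ofReal_pow (norm_nonneg _), ofReal_norm, enorm_eq_nnnorm]
  have hUeq : (∫ x, ‖u x‖ ^ 2) = U.toReal := by
    have h1 : (∫ x, ‖u x‖ ^ 2) = ∫ x, ‖v x‖ ^ 2 := by
      refine integral_congr_ae ?_
      filter_upwards [huv] with x hx
      rw [hx]
    rw [h1, integral_eq_lintegral_of_nonneg_ae (Filter.Eventually.of_forall fun x => by positivity)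
      ((hv_sm.norm.measurable.pow_const 2).aestronglyMeasurable)]
    rw [hU]
    congr 1
    refine lintegral_congr fun x => ?_
    rw [ENNReal.ofReal_pow (norm_nonneg _), ofReal_norm, enorm_eq_nnnorm]
  have hshow : (∫ x, ‖f (ε⁻¹ • x) • (c₀ • ∫ z in Ω, u (x - ε • z))‖ ^ 2) = ∫ x, ‖Fu x‖ ^ 2 := by
    simp only [hFu]
  rw [hshow, hIeq, hCeq, hUeq]
  -- final numeric inequality
  have h1 : I.toReal ≤ ((volume Ω)⁻¹ * (C * U)).toReal := ENNReal.toReal_mono hBtop hIle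
  have h2 : ((volume Ω)⁻¹ * (C * U)).toReal = (volume Ω).toReal⁻¹ * (C.toReal * U.toReal) := by
    rw [ENNReal.toReal_mul, ENNReal.toReal_mul, ENNReal.toReal_inv]
  calc Real.sqrt I.toReal ≤ Real.sqrt ((volume Ω).toReal⁻¹ * (C.toReal * U.toReal)) := by
        refine Real.sqrt_le_sqrt ?_
        rw [← h2]; exact h1
    _ = (Real.sqrt (volume Ω).toReal)⁻¹ * Real.sqrt C.toReal * Real.sqrt U.toReal := by
        rw [Real.sqrt_mul (by positivity), Real.sqrt_mul ENNReal.toReal_nonneg,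
          Real.sqrt_inv, mul_assoc]

end
end

section
/- Matrix-valued version of Lemma 2.3 (inequality (2.6) with a general periodic matrix). Let Λ : ℝ^d → ℂ^{n×m} be Γ-periodic and measurable with ∫_Ω ‖Λ(x)‖_F² dx < ∞, where ‖·‖_F denotes the Frobenius norm of a matrix. Then for every ε > 0 and every u ∈ L²(ℝ^d; ℂ^m), the function x ↦ Λ(x/ε)(S_ε u)(x) belongs to L²(ℝ^d; ℂ^n) and ‖Λ(·/ε) S_ε u‖_{L²(ℝ^d;ℂ^n)} ≤ |Ω|^{−1/2} (∫_Ω ‖Λ(x)‖_F² dx)^{1/2} ‖u‖_{L²(ℝ^d;ℂ^m)}. -/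
open MeasureTheory ENNReal Pointwise

noncomputable section

/-- Multiplication of a Euclidean vector by a matrix, landing in Euclidean space
(so that norms are the `ℓ²` ones). -/
def matVec {n m : ℕ} (A : Matrix (Fin n) (Fin m) ℂ) (v : EuclideanSpace ℂ (Fin m)) :
    EuclideanSpace ℂ (Fin n) :=
  (WithLp.equiv 2 (Fin n → ℂ)).symm (A.mulVec ((WithLp.equiv 2 (Fin m → ℂ)) v))

lemma matVec_norm_sq_le {n m : ℕ} (A : Matrix (Fin n) (Fin m) ℂ) (v : EuclideanSpace ℂ (Fin m)) :
    ‖matVec A v‖ ^ 2 ≤ (∑ i, ∑ j, ‖A i j‖ ^ 2) * ‖v‖ ^ 2 := by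
  have hv : ‖v‖ ^ 2 = ∑ j, ‖v j‖ ^ 2 := by
    rw [EuclideanSpace.norm_eq, Real.sq_sqrt (by positivity)]
  have hMv : ‖matVec A v‖ ^ 2 = ∑ i, ‖∑ j, A i j * v j‖ ^ 2 := by
    rw [EuclideanSpace.norm_eq, Real.sq_sqrt (by positivity)]
    rfl
  rw [hMv, hv, Finset.sum_mul]
  refine Finset.sum_le_sum fun i _ => ?_
  calc ‖∑ j, A i j * v j‖ ^ 2 ≤ (∑ j, ‖A i j‖ * ‖v j‖) ^ 2 := by
        have h1 : ‖∑ j, A i j * v j‖ ≤ ∑ j, ‖A i j‖ * ‖v j‖ := by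
          refine (norm_sum_le _ _).trans (le_of_eq ?_)
          simp [norm_mul]
        exact pow_le_pow_left₀ (norm_nonneg _) h1 2
    _ ≤ (∑ j, ‖A i j‖ ^ 2) * ∑ j, ‖v j‖ ^ 2 :=
        Finset.sum_mul_sq_le_sq_mul_sq _ _ _

lemma matVec_enorm_sq_le {n m : ℕ} (A : Matrix (Fin n) (Fin m) ℂ) (v : EuclideanSpace ℂ (Fin m)) :
    (‖matVec A v‖₊ : ℝ≥0∞) ^ 2 ≤
      (∑ i, ∑ j, (‖A i j‖₊ : ℝ≥0∞) ^ 2) * (‖v‖₊ : ℝ≥0∞) ^ 2 := by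
  have h := matVec_norm_sq_le A v
  calc (‖matVec A v‖₊ : ℝ≥0∞) ^ 2 = ENNReal.ofReal (‖matVec A v‖ ^ 2) := by
        rw [ENNReal.ofReal_pow (norm_nonneg _), ofReal_norm, enorm_eq_nnnorm]
    _ ≤ ENNReal.ofReal ((∑ i, ∑ j, ‖A i j‖ ^ 2) * ‖v‖ ^ 2) := ENNReal.ofReal_le_ofReal h
    _ = (∑ i, ∑ j, (‖A i j‖₊ : ℝ≥0∞) ^ 2) * (‖v‖₊ : ℝ≥0∞) ^ 2 := by
        rw [ENNReal.ofReal_mul (by positivity), ENNReal.ofReal_sum_of_nonneg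
          (fun i _ => by positivity), ENNReal.ofReal_pow (norm_nonneg _),
          ofReal_norm, enorm_eq_nnnorm]
        congr 1
        refine Finset.sum_congr rfl fun i _ => ?_
        rw [ENNReal.ofReal_sum_of_nonneg (fun j _ => by positivity)]
        refine Finset.sum_congr rfl fun j _ => ?_
        rw [ENNReal.ofReal_pow (norm_nonneg _), ofReal_norm, enorm_eq_nnnorm]

lemma my_cs {α : Type*} [MeasurableSpace α] (μ : Measure α) (f : α → ℝ≥0∞)
    (hf : AEMeasurable f μ) :
    (∫⁻ a, f a ∂μ) ^ 2 ≤ μ Set.univ * ∫⁻ a, (f a) ^ 2 ∂μ := by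
  have hpq : Real.HolderConjugate 2 2 := Real.HolderConjugate.two_two
  have h := ENNReal.lintegral_mul_le_Lp_mul_Lq μ hpq hf (aemeasurable_const (b := (1:ℝ≥0∞)))
  simp only [Pi.mul_apply, mul_one, ENNReal.one_rpow, lintegral_const, one_mul] at h
  have h2 := ENNReal.rpow_le_rpow h (by norm_num : (0:ℝ) ≤ 2)
  rw [ENNReal.mul_rpow_of_nonneg _ _ (by norm_num : (0:ℝ) ≤ 2),
    ← ENNReal.rpow_mul, ← ENNReal.rpow_mul] at h2
  norm_num at h2
  rw [mul_comm]
  convert h2 using 3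

set_option maxHeartbeats 2000000 in
/-- **Matrix-valued version of Lemma 2.3 (inequality (2.6)).** -/
theorem steklov_smoothing_periodic_matrix_multiplier
    (d m n : ℕ) (hd : 0 < d) (hm : 0 < m) (hn : 0 < n)
    (a : Fin d → EuclideanSpace ℝ (Fin d))
    (ha_indep : LinearIndependent ℝ a)
    (ha_span : Submodule.span ℝ (Set.range a) = ⊤)
    (Ω : Set (EuclideanSpace ℝ (Fin d)))
    (hΩ : Ω = {x | ∃ t : Fin d → ℝ, (∀ i, 0 ≤ t i ∧ t i < 1) ∧ x = ∑ i, t i • a i})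
    (Λ : EuclideanSpace ℝ (Fin d) → Matrix (Fin n) (Fin m) ℂ)
    (hΛ_meas : ∀ i j, Measurable fun x => Λ x i j)
    (hΛ_per : ∀ (ν : Fin d → ℤ) (x : EuclideanSpace ℝ (Fin d)),
      Λ (x + ∑ i, (ν i : ℝ) • a i) = Λ x)
    (hΛ_L2 : IntegrableOn (fun x => ∑ i, ∑ j, ‖Λ x i j‖ ^ 2) Ω volume)
    (ε : ℝ) (hε : 0 < ε)
    (u : EuclideanSpace ℝ (Fin d) → EuclideanSpace ℂ (Fin m))
    (hu : MemLp u 2 volume) :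
    MemLp (fun x => matVec (Λ (ε⁻¹ • x))
        ((volume Ω).toReal⁻¹ • ∫ z in Ω, u (x - ε • z))) 2 volume ∧
    Real.sqrt (∫ x, ‖matVec (Λ (ε⁻¹ • x))
        ((volume Ω).toReal⁻¹ • ∫ z in Ω, u (x - ε • z))‖ ^ 2) ≤
      (Real.sqrt ((volume Ω).toReal))⁻¹ *
      Real.sqrt (∫ x in Ω, ∑ i, ∑ j, ‖Λ x i j‖ ^ 2) *
      Real.sqrt (∫ x, ‖u x‖ ^ 2) := by
  classical
  -- ## Geometry of the fundamental domain
  let b : Module.Basis (Fin d) ℝ (EuclideanSpace ℝ (Fin d)) := Module.Basis.mk ha_indep (by rw [ha_span])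
  have hb' : ⇑b = a := funext fun i => Module.Basis.mk_apply _ _ _
  have hΩeq : Ω = ZSpan.fundamentalDomain b := by
    rw [hΩ]
    ext x
    simp only [Set.mem_setOf_eq, ZSpan.fundamentalDomain, Set.mem_Ico]
    constructor
    · rintro ⟨t, ht, rfl⟩ i
      have : (∑ i, t i • a i) = ∑ i, t i • b i := by simp [hb']
      rw [this, b.repr_sum_self]
      exact ht i
    · intro h
      refine ⟨fun i => b.repr x i, fun i => h i, ?_⟩
      conv_lhs => rw [← b.sum_repr x]
      simp [hb']
  have hΩmeas : MeasurableSet Ω := hΩeq ▸ ZSpan.fundamentalDomain_measurableSet b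
  have hΩ0 : volume Ω ≠ 0 := hΩeq ▸ ZSpan.measure_fundamentalDomain_ne_zero b
  have hΩtop : volume Ω ≠ ⊤ := by
    rw [hΩeq]
    exact ((ZSpan.fundamentalDomain_isBounded b).measure_lt_top).ne
  -- ## The periodic weight
  set gE : EuclideanSpace ℝ (Fin d) → ℝ≥0∞ :=
    fun x => ∑ i, ∑ j, (‖Λ x i j‖₊ : ℝ≥0∞) ^ 2 with hgE_def
  have hgE_meas : Measurable gE := by
    refine Finset.measurable_sum _ fun i _ => Finset.measurable_sum _ fun j _ => ?_
    exact ((hΛ_meas i j).nnnorm.coe_nnreal_ennreal).pow_const 2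
  have hgE_ne_top : ∀ x, gE x ≠ ⊤ := by
    intro x
    refine (ENNReal.sum_lt_top.mpr fun i _ => ENNReal.sum_lt_top.mpr fun j _ => ?_).ne
    exact ENNReal.pow_lt_top ENNReal.coe_lt_top
  have hgE_per : ∀ (i : Fin d) (x), gE (x + a i) = gE x := by
    intro i x
    have h := hΛ_per (Pi.single i 1) x
    have hsum : (∑ j, ((Pi.single i 1 : Fin d → ℤ) j : ℝ) • a j) = a i := by
      rw [Finset.sum_eq_single i]
      · simp
      · intro j _ hj; simp [Pi.single_apply, hj]
      · simp
    rw [hsum] at h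
    simp only [hgE_def, h]
  -- periodicity over the lattice
  have hper' : ∀ (γ : Submodule.span ℤ (Set.range a)) (x : EuclideanSpace ℝ (Fin d)),
      gE (γ +ᵥ x) = gE x := by
    rintro ⟨γ, hγ⟩ x
    have : γ ∈ AddSubgroup.toIntSubmodule {
      carrier := {γ : EuclideanSpace ℝ (Fin d) | ∀ x, gE (x + γ) = gE x}
      zero_mem' := by simp
      add_mem' := fun {γ₁ γ₂} h1 h2 x => by rw [← add_assoc, h2, h1]
      neg_mem' := fun {γ} h x => by
        have := h (x + -γ); rw [add_assoc, neg_add_cancel, add_zero] at this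
        exact this.symm } := by
      apply Submodule.span_le.2 _ hγ
      rintro _ ⟨i, rfl⟩
      exact fun x => hgE_per i x
    have h := this x
    show gE (γ + x) = gE x
    rw [add_comm]; exact h
  haveI : MeasurableVAdd (Submodule.span ℤ (Set.range a)) (EuclideanSpace ℝ (Fin d)) :=
    { measurable_const_vadd := fun c => (by
      show Measurable fun x : EuclideanSpace ℝ (Fin d) => (c : EuclideanSpace ℝ (Fin d)) + x
      exact measurable_const_add _)
      measurable_vadd_const := fun x => (by
      show Measurable fun c : (Submodule.span ℤ (Set.range a)) =>
        (c : EuclideanSpace ℝ (Fin d)) + x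
      exact measurable_subtype_coe.add_const x) }
  haveI : VAddInvariantMeasure (Submodule.span ℤ (Set.range a))
      (EuclideanSpace ℝ (Fin d)) volume :=
    ⟨fun c s _ => by
      show volume ((fun x : EuclideanSpace ℝ (Fin d) => (c : EuclideanSpace ℝ (Fin d)) + x) ⁻¹' s)
        = volume s
      exact measure_preimage_add volume _ s⟩
  haveI : VAddCommClass (EuclideanSpace ℝ (Fin d)) (Submodule.span ℤ (Set.range a))
      (EuclideanSpace ℝ (Fin d)) :=
    ⟨fun c g x => by
      show c + ((g : EuclideanSpace ℝ (Fin d)) + x) = (g : EuclideanSpace ℝ (Fin d)) + (c + x)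
      exact add_left_comm c g x⟩
  have hfd : IsAddFundamentalDomain (Submodule.span ℤ (Set.range a)) Ω volume := by
    rw [hΩeq, ← hb']
    exact ZSpan.isAddFundamentalDomain b volume
  -- key translation invariance
  have hKey : ∀ w : EuclideanSpace ℝ (Fin d),
      ∫⁻ z in Ω, gE (w + z) = ∫⁻ z in Ω, gE z := by
    intro w
    have hfd' : IsAddFundamentalDomain (Submodule.span ℤ (Set.range a)) (w +ᵥ Ω) volume :=
      hfd.vadd_of_comm w
    calc ∫⁻ z in Ω, gE (w + z) = ∫⁻ x in w +ᵥ Ω, gE x := by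
          rw [← lintegral_indicator hΩmeas, ← lintegral_indicator (hΩmeas.const_vadd w)]
          rw [← lintegral_add_left_eq_self (fun x => (w +ᵥ Ω).indicator gE x) w]
          congr 1
          ext z
          by_cases hz : z ∈ Ω
          · rw [Set.indicator_of_mem hz, Set.indicator_of_mem]
            exact Set.vadd_mem_vadd_set hz
          · rw [Set.indicator_of_notMem hz, Set.indicator_of_notMem]
            intro hc
            exact hz (by simpa using Set.vadd_mem_vadd_set_iff.mp hc)
      _ = ∫⁻ z in Ω, gE z := hfd'.setLIntegral_eq hfd gE hper'
  -- ## measurable representative of u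
  obtain ⟨hu_meas, hu_fin⟩ := hu
  set v : EuclideanSpace ℝ (Fin d) → EuclideanSpace ℂ (Fin m) := hu_meas.mk u with hv_def
  have hv_sm : StronglyMeasurable v := hu_meas.stronglyMeasurable_mk
  have huv : u =ᵐ[volume] v := hu_meas.ae_eq_mk
  -- quasi measure preserving
  have hQMP : ∀ x : EuclideanSpace ℝ (Fin d),
      Measure.QuasiMeasurePreserving (fun z : EuclideanSpace ℝ (Fin d) => x - ε • z)
        volume volume := by
    intro x
    have h1 : Measure.QuasiMeasurePreserving
        (fun y : EuclideanSpace ℝ (Fin d) => x + y) volume volume :=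
      (measurePreserving_add_left volume x).quasiMeasurePreserving
    have h2 : Measure.QuasiMeasurePreserving
        (Neg.neg : EuclideanSpace ℝ (Fin d) → EuclideanSpace ℝ (Fin d)) volume volume :=
      (Measure.measurePreserving_neg volume).quasiMeasurePreserving
    have h3 : Measure.QuasiMeasurePreserving
        (fun z : EuclideanSpace ℝ (Fin d) => ε • z) volume volume :=
      Measure.quasiMeasurePreserving_smul volume hε.ne'
    have h4 := (h1.comp h2).comp h3
    have hfun : (fun z : EuclideanSpace ℝ (Fin d) => x - ε • z) =
        (fun y : EuclideanSpace ℝ (Fin d) => x + y) ∘ (Neg.neg) ∘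
          (fun z : EuclideanSpace ℝ (Fin d) => ε • z) :=
      funext fun z => sub_eq_add_neg _ _
    rw [hfun]
    exact h4
  have hVeq : ∀ x, (∫ z in Ω, u (x - ε • z)) = ∫ z in Ω, v (x - ε • z) := by
    intro x
    refine integral_congr_ae (ae_restrict_of_ae ?_)
    exact (hQMP x).ae_eq huv
  simp only [hVeq]
  -- ## strong measurability of the smoothed function
  have hT : Measurable (fun p : EuclideanSpace ℝ (Fin d) × EuclideanSpace ℝ (Fin d) =>
      p.1 - ε • p.2) := measurable_fst.sub (measurable_snd.const_smul ε)
  have hV_sm : StronglyMeasurable (fun x => ∫ z in Ω, v (x - ε • z)) :=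
    StronglyMeasurable.integral_prod_right' (hv_sm.comp_measurable hT)
  set c : ℝ := (volume Ω).toReal with hc_def
  set F : EuclideanSpace ℝ (Fin d) → EuclideanSpace ℂ (Fin n) :=
    fun x => matVec (Λ (ε⁻¹ • x)) (c⁻¹ • ∫ z in Ω, v (x - ε • z)) with hF_def
  have hSu_sm : StronglyMeasurable (fun x => c⁻¹ • ∫ z in Ω, v (x - ε • z)) :=
    hV_sm.const_smul c⁻¹
  have hF_meas : Measurable F := by
    refine (WithLp.measurable_toLp 2 (Fin n → ℂ)).comp (f := fun x => WithLp.ofLp (F x)) (measurable_pi_lambda _ ?_)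
    intro i
    have : (fun x => F x i) =
        fun x => ∑ j, Λ (ε⁻¹ • x) i j * (c⁻¹ • ∫ z in Ω, v (x - ε • z)) j := rfl
    rw [this]
    refine Finset.measurable_sum _ fun j _ => Measurable.mul ?_ ?_
    · exact (hΛ_meas i j).comp (measurable_const_smul ε⁻¹)
    · have hj : Measurable fun (w : EuclideanSpace ℂ (Fin m)) => w j := by
        exact (EuclideanSpace.proj j : EuclideanSpace ℂ (Fin m) →L[ℂ] ℂ).continuous.measurable
      exact hj.comp hSu_sm.measurable
  have hF_sm : StronglyMeasurable F := hF_meas.stronglyMeasurable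
  -- ## lintegral quantities
  set H : EuclideanSpace ℝ (Fin d) → ℝ≥0∞ := fun y => (‖v y‖₊ : ℝ≥0∞) ^ 2 with hH_def
  have hH_meas : Measurable H := (hv_sm.measurable.nnnorm.coe_nnreal_ennreal).pow_const 2
  set KE : ℝ≥0∞ := ∫⁻ z in Ω, gE z with hKE_def
  set U : ℝ≥0∞ := ∫⁻ y, (‖u y‖₊ : ℝ≥0∞) ^ 2 with hU_def
  have hofReal : ∀ x, ENNReal.ofReal (∑ i, ∑ j, ‖Λ x i j‖ ^ 2) = gE x := by
    intro x
    rw [ENNReal.ofReal_sum_of_nonneg (fun i _ => by positivity)]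
    refine Finset.sum_congr rfl fun i _ => ?_
    rw [ENNReal.ofReal_sum_of_nonneg (fun j _ => by positivity)]
    refine Finset.sum_congr rfl fun j _ => ?_
    rw [ENNReal.ofReal_pow (norm_nonneg _), ofReal_norm, enorm_eq_nnnorm]
  have hKE_ne_top : KE ≠ ⊤ := by
    have : KE = ∫⁻ x in Ω, ENNReal.ofReal (∑ i, ∑ j, ‖Λ x i j‖ ^ 2) :=
      lintegral_congr fun x => (hofReal x).symm
    rw [this]
    exact hΛ_L2.lintegral_lt_top.ne
  have hU_ne_top : U ≠ ⊤ := by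
    have h := (eLpNorm_lt_top_iff_lintegral_rpow_enorm_lt_top
      (by norm_num : (2:ℝ≥0∞) ≠ 0) (by norm_num : (2:ℝ≥0∞) ≠ ⊤)).mp hu_fin
    have he : U = ∫⁻ y, (‖u y‖₊ : ℝ≥0∞) ^ (2:ℝ≥0∞).toReal := by
      refine lintegral_congr fun y => ?_
      rw [ENNReal.toReal_ofNat, ← ENNReal.rpow_natCast]
      norm_num
    rw [he]
    exact h.ne
  have hHU : (∫⁻ y, H y) = U := by
    refine lintegral_congr_ae ?_
    filter_upwards [huv] with y hy
    rw [hH_def, hy]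
  -- pointwise bound
  have hstep1 : ∀ x, (‖F x‖₊ : ℝ≥0∞) ^ 2 ≤
      (volume Ω)⁻¹ * (gE (ε⁻¹ • x) * ∫⁻ z in Ω, H (x - ε • z)) := by
    intro x
    have h1 := matVec_enorm_sq_le (Λ (ε⁻¹ • x)) (c⁻¹ • ∫ z in Ω, v (x - ε • z))
    have hcinv : (‖c⁻¹‖₊ : ℝ≥0∞) = (volume Ω)⁻¹ := by
      rw [← enorm_eq_nnnorm, ← ofReal_norm, Real.norm_of_nonneg (by positivity)]
      rw [hc_def, ENNReal.ofReal_inv_of_pos (ENNReal.toReal_pos hΩ0 hΩtop),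
        ENNReal.ofReal_toReal hΩtop]
    have h2 : (‖c⁻¹ • ∫ z in Ω, v (x - ε • z)‖₊ : ℝ≥0∞) ^ 2 ≤
        ((volume Ω)⁻¹) ^ 2 * (∫⁻ z in Ω, (‖v (x - ε • z)‖₊ : ℝ≥0∞)) ^ 2 := by
      rw [nnnorm_smul]
      push_cast
      rw [mul_pow, hcinv]
      gcongr
      exact enorm_integral_le_lintegral_enorm _
    have h3 : (∫⁻ z in Ω, (‖v (x - ε • z)‖₊ : ℝ≥0∞)) ^ 2 ≤
        volume Ω * ∫⁻ z in Ω, H (x - ε • z) := by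
      have := my_cs (volume.restrict Ω) (fun z => (‖v (x - ε • z)‖₊ : ℝ≥0∞))
        ((hv_sm.measurable.comp ((measurable_id.const_sub x).comp
          (measurable_id.const_smul ε))).nnnorm.coe_nnreal_ennreal).aemeasurable
      simpa [Measure.restrict_apply_univ] using this
    calc (‖F x‖₊ : ℝ≥0∞) ^ 2
        ≤ gE (ε⁻¹ • x) * (‖c⁻¹ • ∫ z in Ω, v (x - ε • z)‖₊ : ℝ≥0∞) ^ 2 := h1
      _ ≤ gE (ε⁻¹ • x) * (((volume Ω)⁻¹) ^ 2 * (volume Ω * ∫⁻ z in Ω, H (x - ε • z))) := by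
          refine mul_le_mul_right (h2.trans ?_) _
          exact mul_le_mul_right h3 _
      _ = (volume Ω)⁻¹ * (gE (ε⁻¹ • x) * ∫⁻ z in Ω, H (x - ε • z)) := by
          rw [pow_two]
          rw [show ((volume Ω)⁻¹ * (volume Ω)⁻¹ * (volume Ω * ∫⁻ z in Ω, H (x - ε • z)))
            = ((volume Ω)⁻¹ * volume Ω) * ((volume Ω)⁻¹ * ∫⁻ z in Ω, H (x - ε • z)) by ring,
            ENNReal.inv_mul_cancel hΩ0 hΩtop, one_mul]
          ring
  -- Tonelli computation
  have hstep2 : (∫⁻ x, gE (ε⁻¹ • x) * ∫⁻ z in Ω, H (x - ε • z)) = KE * ∫⁻ y, H y := by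
    have hmeasΦ : Measurable (fun p : EuclideanSpace ℝ (Fin d) × EuclideanSpace ℝ (Fin d) =>
        gE (ε⁻¹ • p.1) * H (p.1 - ε • p.2)) :=
      ((hgE_meas.comp (measurable_fst.const_smul ε⁻¹))).mul (hH_meas.comp hT)
    calc (∫⁻ x, gE (ε⁻¹ • x) * ∫⁻ z in Ω, H (x - ε • z))
        = ∫⁻ x, ∫⁻ z in Ω, gE (ε⁻¹ • x) * H (x - ε • z) := by
          refine lintegral_congr fun x => ?_
          exact (lintegral_const_mul' _ _ (hgE_ne_top _)).symm
      _ = ∫⁻ z in Ω, ∫⁻ x, gE (ε⁻¹ • x) * H (x - ε • z) := by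
          exact lintegral_lintegral_swap hmeasΦ.aemeasurable
      _ = ∫⁻ z in Ω, ∫⁻ y, gE (ε⁻¹ • y + z) * H y := by
          refine lintegral_congr fun z => ?_
          rw [← lintegral_add_right_eq_self
            (fun x => gE (ε⁻¹ • x) * H (x - ε • z)) (ε • z)]
          refine lintegral_congr fun y => ?_
          have e1 : ε⁻¹ • (y + ε • z) = ε⁻¹ • y + z := by
            rw [smul_add, smul_smul, inv_mul_cancel₀ hε.ne', one_smul]
          have e2 : y + ε • z - ε • z = y := add_sub_cancel_right y (ε • z)
          rw [e1, e2]
      _ = ∫⁻ y, ∫⁻ z in Ω, gE (ε⁻¹ • y + z) * H y := by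
          refine (lintegral_lintegral_swap ?_).symm
          have hm : Measurable (fun p : EuclideanSpace ℝ (Fin d) × EuclideanSpace ℝ (Fin d) =>
              gE (ε⁻¹ • p.1 + p.2) * H p.1) :=
            ((hgE_meas.comp ((measurable_fst.const_smul ε⁻¹).add measurable_snd))).mul
              (hH_meas.comp measurable_fst)
          exact hm.aemeasurable
      _ = ∫⁻ y, KE * H y := by
          refine lintegral_congr fun y => ?_
          rw [lintegral_mul_const' _ _ (by
            rw [hH_def]; exact (ENNReal.pow_lt_top ENNReal.coe_lt_top).ne),
            hKey (ε⁻¹ • y), mul_comm]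
      _ = KE * ∫⁻ y, H y := by
          exact lintegral_const_mul' _ _ hKE_ne_top
  -- ## putting everything together
  have hmain : (∫⁻ x, (‖F x‖₊ : ℝ≥0∞) ^ 2) ≤ (volume Ω)⁻¹ * (KE * U) := by
    calc (∫⁻ x, (‖F x‖₊ : ℝ≥0∞) ^ 2)
        ≤ ∫⁻ x, (volume Ω)⁻¹ * (gE (ε⁻¹ • x) * ∫⁻ z in Ω, H (x - ε • z)) :=
          lintegral_mono hstep1
      _ = (volume Ω)⁻¹ * ∫⁻ x, gE (ε⁻¹ • x) * ∫⁻ z in Ω, H (x - ε • z) :=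
          lintegral_const_mul' _ _ (ENNReal.inv_ne_top.mpr hΩ0)
      _ = (volume Ω)⁻¹ * (KE * U) := by rw [hstep2, hHU]
  have hRHS_ne_top : (volume Ω)⁻¹ * (KE * U) ≠ ⊤ :=
    ENNReal.mul_ne_top (ENNReal.inv_ne_top.mpr hΩ0) (ENNReal.mul_ne_top hKE_ne_top hU_ne_top)
  have hF_lt_top : (∫⁻ x, (‖F x‖₊ : ℝ≥0∞) ^ 2) < ⊤ :=
    lt_of_le_of_lt hmain (lt_top_iff_ne_top.mpr hRHS_ne_top)
  have hmem : MemLp F 2 volume := by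
    refine ⟨hF_sm.aestronglyMeasurable, ?_⟩
    rw [eLpNorm_lt_top_iff_lintegral_rpow_enorm_lt_top
      (by norm_num : (2:ℝ≥0∞) ≠ 0) (by norm_num : (2:ℝ≥0∞) ≠ ⊤)]
    have he : (∫⁻ x, (‖F x‖₊ : ℝ≥0∞) ^ (2:ℝ≥0∞).toReal) = ∫⁻ x, (‖F x‖₊ : ℝ≥0∞) ^ 2 := by
      refine lintegral_congr fun x => ?_
      rw [ENNReal.toReal_ofNat, ← ENNReal.rpow_natCast]
      norm_num
    refine lt_of_eq_of_lt he ?_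
    exact hF_lt_top
  refine ⟨hmem, ?_⟩
  -- convert everything to `toReal`
  have hFint : (∫ x, ‖F x‖ ^ 2) = (∫⁻ x, (‖F x‖₊ : ℝ≥0∞) ^ 2).toReal := by
    rw [integral_eq_lintegral_of_nonneg_ae (Filter.Eventually.of_forall fun x => by positivity)
      ((hF_meas.norm.pow_const 2).aestronglyMeasurable)]
    congr 1
    refine lintegral_congr fun x => ?_
    rw [ENNReal.ofReal_pow (norm_nonneg _), ofReal_norm, enorm_eq_nnnorm]
  have huint : (∫ x, ‖u x‖ ^ 2) = U.toReal := by
    rw [integral_eq_lintegral_of_nonneg_ae (Filter.Eventually.of_forall fun x => by positivity)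
      ((hu_meas.norm.aemeasurable.pow_const 2).aestronglyMeasurable)]
    congr 1
    refine lintegral_congr fun x => ?_
    rw [ENNReal.ofReal_pow (norm_nonneg _), ofReal_norm, enorm_eq_nnnorm]
  have hgint : (∫ x in Ω, ∑ i, ∑ j, ‖Λ x i j‖ ^ 2) = KE.toReal := by
    rw [integral_eq_lintegral_of_nonneg_ae (Filter.Eventually.of_forall fun x => by positivity)
      hΛ_L2.aestronglyMeasurable]
    congr 1
    exact lintegral_congr fun x => hofReal x
  rw [hFint, huint, hgint]
  have h1 : (∫⁻ x, (‖F x‖₊ : ℝ≥0∞) ^ 2).toReal ≤ ((volume Ω)⁻¹ * (KE * U)).toReal :=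
    ENNReal.toReal_mono hRHS_ne_top hmain
  calc Real.sqrt ((∫⁻ x, (‖F x‖₊ : ℝ≥0∞) ^ 2).toReal)
      ≤ Real.sqrt (((volume Ω)⁻¹ * (KE * U)).toReal) := Real.sqrt_le_sqrt h1
    _ = (Real.sqrt c)⁻¹ * Real.sqrt KE.toReal * Real.sqrt U.toReal := by
        rw [ENNReal.toReal_mul, ENNReal.toReal_mul, ENNReal.toReal_inv,
          Real.sqrt_mul (by positivity), Real.sqrt_mul ENNReal.toReal_nonneg,
          Real.sqrt_inv, ← mul_assoc, hc_def]
end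
end
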